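/- Let X be a Tychonoff space. Then the Stone–Čech compactification βX is indecomposable (every connected subset of βX is dense or nowhere dense in βX) if and only if X is strongly indecomposable. -/

import Mathlib

/-- A space is *strongly indecomposable* if for every two nonempty disjoint open
sets `U` and `V` there are closed sets `A`, `B` covering the space, each meeting `U`,
with `A ∩ B ⊆ V`. -/
def StronglyIndecomposable (X : Type*) [TopologicalSpace X] : Prop :=
  ∀ U V : Set X, IsOpen U → IsOpen V → U.Nonempty → V.Nonempty → Disjoint U V →
    ∃ A B : Set X, IsClosed A ∧ IsClosed B ∧ A ∪ B = Set.univ ∧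
      (A ∩ U).Nonempty ∧ (B ∩ U).Nonempty ∧ A ∩ B ⊆ V

/-- A space is *indecomposable* if every connected subset is dense or nowhere dense. -/
def IndecomposableSpace (X : Type*) [TopologicalSpace X] : Prop :=
  ∀ C : Set X, IsConnected C → Dense C ∨ IsNowhereDense C


open Set Topology unitInterval

variable {X : Type} [TopologicalSpace X]

/-- If `S` is closed in a T₃.₅ space `X` and `x ∉ S`, then `stoneCechUnit x` is not in the
closure of the image of `S` in `βX`. -/
lemma stoneCechUnit_not_mem_closure_image [T35Space X] {S : Set X} (hS : IsClosed S)
    {x : X} (hx : x ∉ S) : stoneCechUnit x ∉ closure (stoneCechUnit '' S) := by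
  obtain ⟨f, fc, fx, fS⟩ := CompletelyRegularSpace.completely_regular x S hS hx
  intro hmem
  have hext : stoneCechExtend fc ∘ stoneCechUnit = f := stoneCechExtend_extends fc
  have h1 : EqOn (stoneCechExtend fc) 1 (closure (stoneCechUnit '' S)) := by
    apply Set.EqOn.closure (fun y hy => ?_) (continuous_stoneCechExtend fc) continuous_const
    obtain ⟨s, hs, rfl⟩ := hy
    have := congrFun hext s
    simp only [Function.comp_apply] at this
    rw [this]
    exact fS hs
  have h2 : stoneCechExtend fc (stoneCechUnit x) = f x := congrFun hext x
  rw [h1 hmem, fx] at h2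
  have h3 := congrArg Subtype.val h2
  norm_num at h3

/-- Key lemma: if `A`, `B` are closed sets covering `X`, then in `βX` the closures of their
images intersect inside the closure of the image of `A ∩ B`. -/
lemma closure_image_inter_subset {A B : Set X} (hA : IsClosed A) (hB : IsClosed B)
    (hAB : A ∪ B = Set.univ) :
    closure (stoneCechUnit '' A) ∩ closure (stoneCechUnit '' B) ⊆
      closure (stoneCechUnit '' (A ∩ B)) := by
  classical
  rintro p ⟨hpA, hpB⟩
  by_contra hp
  obtain ⟨f, f0, f1, fIcc⟩ := exists_continuous_zero_one_of_isClosed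
    (isClosed_closure (s := stoneCechUnit '' (A ∩ B))) (isClosed_singleton (x := p))
    (disjoint_singleton_right.mpr hp)
  set f' : StoneCech X → I := fun y => ⟨f y, fIcc y⟩ with hf'
  have cf' : Continuous f' := f.continuous.subtype_mk fIcc
  have hABzero : ∀ a ∈ A ∩ B, f' (stoneCechUnit a) = 0 := by
    intro a ha
    have : stoneCechUnit a ∈ closure (stoneCechUnit '' (A ∩ B)) :=
      subset_closure (mem_image_of_mem _ ha)
    exact Subtype.ext (f0 this)
  set g : X → I := A.piecewise (f' ∘ stoneCechUnit) 0 with hgdef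
  have hg : Continuous g := by
    apply Continuous.piecewise ?_ (cf'.comp continuous_stoneCechUnit) continuous_const
    intro a ha
    rw [frontier_eq_closure_inter_closure] at ha
    have haA : a ∈ A := hA.closure_subset ha.1
    have haB : a ∈ B := by
      have : a ∈ closure Aᶜ := ha.2
      have hsub : (Aᶜ : Set X) ⊆ B := by
        intro y hy
        rcases (hAB ▸ Set.mem_univ y : y ∈ A ∪ B) with h | h
        · exact absurd h hy
        · exact h
      exact hB.closure_subset (closure_mono hsub this)
    exact hABzero a ⟨haA, haB⟩
  have hGu : ∀ x : X, stoneCechExtend hg (stoneCechUnit x) = g x :=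
    fun x => congrFun (stoneCechExtend_extends hg) x
  have h1 : EqOn (stoneCechExtend hg) f' (closure (stoneCechUnit '' A)) := by
    apply Set.EqOn.closure (fun y hy => ?_) (continuous_stoneCechExtend hg) cf'
    obtain ⟨a, haA, rfl⟩ := hy
    rw [hGu a]
    exact Set.piecewise_eq_of_mem _ _ _ haA
  have h2 : EqOn (stoneCechExtend hg) (fun _ => (0 : I)) (closure (stoneCechUnit '' B)) := by
    apply Set.EqOn.closure (fun y hy => ?_) (continuous_stoneCechExtend hg) continuous_const
    obtain ⟨b, hbB, rfl⟩ := hy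
    rw [hGu b]
    by_cases hbA : b ∈ A
    · rw [hgdef]
      simp only [Set.piecewise_eq_of_mem _ _ _ hbA, Function.comp_apply]
      exact hABzero b ⟨hbA, hbB⟩
    · exact Set.piecewise_eq_of_notMem _ _ _ hbA
  have e1 : stoneCechExtend hg p = f' p := h1 hpA
  have e2 : stoneCechExtend hg p = 0 := h2 hpB
  have : (1 : ℝ) = 0 := by
    have hfp : f p = 1 := by simpa using f1 (mem_singleton p)
    have : (f' p : ℝ) = (0 : I) := by rw [← e1, e2]
    simp only [hf', hfp] at this
    simp at this
  norm_num at this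

/-- For a Tychonoff space `X`, the Stone–Čech compactification `βX` is indecomposable
iff `X` is strongly indecomposable. -/
theorem stoneCech_indecomposable_iff (X : Type) [TopologicalSpace X] [T35Space X] :
    IndecomposableSpace (StoneCech X) ↔ StronglyIndecomposable X := by
  set u : X → StoneCech X := stoneCechUnit with hu
  have hdense : Dense (Set.range u) := denseRange_stoneCechUnit
  constructor
  · -- βX indecomposable → X strongly indecomposable
    intro hInd U V hU hV hUne hVne hdisj
    by_contra hno
    have hUV : U ⊆ Vᶜ := fun x hx hxV => (Set.disjoint_left.mp hdisj hx) hxV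
    set Zs : Set (StoneCech X) := closure (u '' Vᶜ) with hZ
    have hZc : IsClosed Zs := isClosed_closure
    haveI : CompactSpace Zs := isCompact_iff_compactSpace.mp hZc.isCompact
    obtain ⟨x0, hx0U⟩ := hUne
    have hx0Z : u x0 ∈ Zs := subset_closure (mem_image_of_mem u (hUV hx0U))
    set P : Zs := ⟨u x0, hx0Z⟩ with hP
    have claim : closure (u '' U) ⊆ Subtype.val '' connectedComponent P := by
      intro q hq
      have hqZ : q ∈ Zs := closure_mono (Set.image_mono hUV) hq
      refine ⟨⟨q, hqZ⟩, ?_, rfl⟩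
      rw [connectedComponent_eq_iInter_isClopen, Set.mem_iInter]
      rintro ⟨s, hsclopen, hPs⟩
      by_contra hqs
      have hscompact : IsCompact (Subtype.val '' s) :=
        hsclopen.isClosed.isCompact.image continuous_subtype_val
      have hsccompact : IsCompact (Subtype.val '' sᶜ) :=
        hsclopen.compl.isClosed.isCompact.image continuous_subtype_val
      have hdisj2 : Disjoint (Subtype.val '' s) (Subtype.val '' sᶜ) := by
        rw [Set.disjoint_image_iff Subtype.val_injective]
        exact disjoint_compl_right
      obtain ⟨O₁, O₂, hO₁, hO₂, hFO₁, hGO₂, hOdisj⟩ :=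
        SeparatedNhds.of_isCompact_isCompact hscompact hsccompact hdisj2
      have hZO : Zs ⊆ O₁ ∪ O₂ := by
        intro z hz
        by_cases hzs : (⟨z, hz⟩ : Zs) ∈ s
        · exact Or.inl (hFO₁ ⟨⟨z, hz⟩, hzs, rfl⟩)
        · exact Or.inr (hGO₂ ⟨⟨z, hz⟩, hzs, rfl⟩)
      refine hno ⟨u ⁻¹' O₂ᶜ, u ⁻¹' O₁ᶜ,
        (isClosed_compl_iff.mpr hO₂).preimage continuous_stoneCechUnit,
        (isClosed_compl_iff.mpr hO₁).preimage continuous_stoneCechUnit, ?_, ?_, ?_, ?_⟩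
      · -- union is univ
        apply Set.eq_univ_iff_forall.mpr
        intro x
        by_cases hx : u x ∈ O₂
        · exact Or.inr (Set.disjoint_right.mp hOdisj hx)
        · exact Or.inl hx
      · -- A ∩ U nonempty
        have hx0O₁ : u x0 ∈ O₁ := hFO₁ ⟨P, hPs, rfl⟩
        exact ⟨x0, Set.disjoint_left.mp hOdisj hx0O₁, hx0U⟩
      · -- B ∩ U nonempty
        have hqO₂ : q ∈ O₂ := hGO₂ ⟨⟨q, hqZ⟩, hqs, rfl⟩
        obtain ⟨y, hyO₂, b, hbU, rfl⟩ := mem_closure_iff.mp hq O₂ hO₂ hqO₂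
        exact ⟨b, Set.disjoint_right.mp hOdisj hyO₂, hbU⟩
      · -- A ∩ B ⊆ V
        rintro x ⟨hx1, hx2⟩
        by_contra hxV
        have : u x ∈ Zs := subset_closure (mem_image_of_mem u hxV)
        rcases hZO this with h | h
        · exact hx2 h
        · exact hx1 h
    set C : Set (StoneCech X) := Subtype.val '' connectedComponent P with hCdef
    have hC : IsConnected C :=
      isConnected_connectedComponent.image _ continuous_subtype_val.continuousOn
    have hCZ : C ⊆ Zs := Subtype.coe_image_subset _ _
    rcases hInd C hC with hDense | hND
    · obtain ⟨v, hvV⟩ := hVne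
      have hvZ : u v ∉ Zs :=
        stoneCechUnit_not_mem_closure_image hV.isClosed_compl (fun hc => hc hvV)
      exact hvZ (closure_minimal hCZ hZc (hDense (u v)))
    · have hUstar : (closure (u '' Uᶜ))ᶜ ⊆ closure (u '' U) := by
        intro y hy
        have huniv : closure (u '' U) ∪ closure (u '' Uᶜ) = Set.univ := by
          rw [← closure_union, ← Set.image_union, Set.union_compl_self, Set.image_univ]
          exact hdense.closure_eq
        rcases (huniv ▸ Set.mem_univ y : y ∈ _ ∪ _) with h | h
        · exact h
        · exact absurd h hy
      have hsub : (closure (u '' Uᶜ))ᶜ ⊆ interior (closure C) :=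
        interior_maximal (fun y hy => subset_closure (claim (hUstar hy)))
          (isOpen_compl_iff.mpr isClosed_closure)
      have hx0 : u x0 ∈ (closure (u '' Uᶜ))ᶜ :=
        stoneCechUnit_not_mem_closure_image hU.isClosed_compl (fun hc => hc hx0U)
      have : u x0 ∈ interior (closure C) := hsub hx0
      rw [hND] at this
      exact this
  · -- X strongly indecomposable → βX indecomposable
    intro hS C hC
    by_contra hcon
    push_neg at hcon
    obtain ⟨hnd, hnnd⟩ := hcon
    have hint : (interior (closure C)).Nonempty := Set.nonempty_iff_ne_empty.mpr hnnd
    obtain ⟨p, hp⟩ : ∃ p, p ∉ closure C := by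
      by_contra h
      push_neg at h
      exact hnd (fun x => h x)
    obtain ⟨W₁, W₂, hW₁, hW₂, hCW₁, hpW₂, hWd⟩ :=
      SeparatedNhds.of_isCompact_isCompact isClosed_closure.isCompact isCompact_singleton
        (disjoint_singleton_right.mpr hp)
    have hclW₂ : Disjoint (closure C) (closure W₂) := by
      refine Set.disjoint_left.mpr fun x hx hx2 => ?_
      have h1 : W₁ ∩ closure W₂ ⊆ closure (W₁ ∩ W₂) := hW₁.inter_closure
      have : x ∈ closure (W₁ ∩ W₂) := h1 ⟨hCW₁ hx, hx2⟩
      rw [Set.disjoint_iff_inter_eq_empty.mp hWd, closure_empty] at this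
      exact this
    obtain ⟨A, B, hAcl, hBcl, hABuniv, ⟨a, haA, haU⟩, ⟨b, hbB, hbU⟩, hABV⟩ :=
      hS (u ⁻¹' interior (closure C)) (u ⁻¹' W₂)
        (isOpen_interior.preimage continuous_stoneCechUnit)
        (hW₂.preimage continuous_stoneCechUnit)
        (denseRange_stoneCechUnit.exists_mem_open isOpen_interior hint)
        (denseRange_stoneCechUnit.exists_mem_open hW₂ ⟨p, hpW₂ rfl⟩)
        (Set.disjoint_left.mpr fun x hx1 hx2 =>
          Set.disjoint_left.mp hWd (hCW₁ (interior_subset hx1)) hx2)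
    have key := closure_image_inter_subset hAcl hBcl hABuniv
    have hsmall : closure (u '' (A ∩ B)) ⊆ closure W₂ :=
      closure_minimal (fun y ⟨x, hx, hxy⟩ => hxy ▸ subset_closure (hABV hx)) isClosed_closure
    have final : ∀ z ∈ closure C, z ∈ closure (u '' A) → z ∈ closure (u '' B) → False := by
      intro z hzC hzA hzB
      have h1 : z ∈ closure W₂ := hsmall (key ⟨hzA, hzB⟩)
      exact Set.disjoint_left.mp hclW₂ hzC h1
    have hcover : closure (u '' A) ∪ closure (u '' B) = Set.univ := by
      rw [← closure_union, ← Set.image_union, hABuniv, Set.image_univ]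
      exact hdense.closure_eq
    have hsplit : C ⊆ closure (u '' A) ∨ C ⊆ closure (u '' B) := by
      by_contra hsp
      push_neg at hsp
      obtain ⟨z1, hz1C, hz1A⟩ := Set.not_subset.mp hsp.1
      obtain ⟨z2, hz2C, hz2B⟩ := Set.not_subset.mp hsp.2
      have hsubcov : C ⊆ (closure (u '' B))ᶜ ∪ (closure (u '' A))ᶜ := by
        intro z hz
        by_cases hzA : z ∈ closure (u '' A)
        · by_cases hzB : z ∈ closure (u '' B)
          · exact absurd (final z (subset_closure hz) hzA hzB) (not_false)
          · exact Or.inl hzB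
        · exact Or.inr hzA
      obtain ⟨w, -, hw⟩ := hC.isPreconnected _ _
        (isOpen_compl_iff.mpr isClosed_closure) (isOpen_compl_iff.mpr isClosed_closure)
        hsubcov ⟨z2, hz2C, hz2B⟩ ⟨z1, hz1C, hz1A⟩
      rcases (hcover ▸ Set.mem_univ w : w ∈ _ ∪ _) with h | h
      · exact hw.2 h
      · exact hw.1 h
    rcases hsplit with hCA | hCB
    · have hclCA : closure C ⊆ closure (u '' A) := closure_minimal hCA isClosed_closure
      exact final (u b) (interior_subset hbU) (hclCA (interior_subset hbU))
        (subset_closure (mem_image_of_mem u hbB))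
    · have hclCB : closure C ⊆ closure (u '' B) := closure_minimal hCB isClosed_closure
      exact final (u a) (interior_subset haU)
        (subset_closure (mem_image_of_mem u haA)) (hclCB (interior_subset haU))
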